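/- arXiv:1101.5177 — 3 statements merged into one kernel-verified Lean document; each statement's English description precedes it below -/
import Mathlib

section
/- Let n ≥ 1, a ∈ ℝⁿ, let V, U ⊂ ℝⁿ be open, let ρ : V → ℝ be continuously differentiable, and suppose the map Φ : V → U, Φ(x̄) := a + ρ(x̄) x̄, is a bijection whose inverse Θ : U → V is differentiable. Let w : V → ℝ be continuously differentiable and set u := w ∘ Θ. Then for every x ∈ U, writing x̄ := Θ(x) and Ψ(x̄) := ρ(x̄) + ∇ρ(x̄)·x̄, and assuming ρ(x̄) ≠ 0 and Ψ(x̄) ≠ 0: ∇u(x) = (1/ρ(x̄)) ∇w(x̄) − ((x̄ · ∇w(x̄)) / (ρ(x̄) Ψ(x̄))) ∇ρ(x̄). -/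
open RealInnerProductSpace

/-- Equation (A.8): transformation rule for the spatial gradient under the radial change of
variables `x = a + ρ(x̄)x̄`, with `Ψ = ρ + ∇ρ·x̄`:
`∇u(x) = (1/ρ(x̄)) ∇w(x̄) − ((x̄·∇w(x̄))/(ρ(x̄)Ψ(x̄))) ∇ρ(x̄)` for `u = w ∘ Θ`. -/
theorem gradient_transformation (n : ℕ) (hn : 1 ≤ n)
    (a : EuclideanSpace ℝ (Fin n))
    (V U : Set (EuclideanSpace ℝ (Fin n))) (hV : IsOpen V) (hU : IsOpen U)
    (ρ : EuclideanSpace ℝ (Fin n) → ℝ) (hρ : ContDiffOn ℝ 1 ρ V)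
    (Φ : EuclideanSpace ℝ (Fin n) → EuclideanSpace ℝ (Fin n))
    (hΦdef : ∀ xb, Φ xb = a + ρ xb • xb)
    (hbij : Set.BijOn Φ V U)
    (Θ : EuclideanSpace ℝ (Fin n) → EuclideanSpace ℝ (Fin n))
    (hΘmaps : Set.MapsTo Θ U V) (hΘinv : ∀ x ∈ U, Φ (Θ x) = x)
    (hΘdiff : DifferentiableOn ℝ Θ U)
    (w : EuclideanSpace ℝ (Fin n) → ℝ) (hw : ContDiffOn ℝ 1 w V)
    (u : EuclideanSpace ℝ (Fin n) → ℝ) (hu : u = w ∘ Θ)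
    (x : EuclideanSpace ℝ (Fin n)) (hx : x ∈ U)
    (hρ0 : ρ (Θ x) ≠ 0)
    (Ψ : ℝ) (hΨdef : Ψ = ρ (Θ x) + ⟪gradient ρ (Θ x), Θ x⟫) (hΨ0 : Ψ ≠ 0) :
    gradient u x =
      (ρ (Θ x))⁻¹ • gradient w (Θ x)
        - (⟪Θ x, gradient w (Θ x)⟫ / (ρ (Θ x) * Ψ)) • gradient ρ (Θ x) := by
  have hxbV : Θ x ∈ V := hΘmaps hx
  have hρd : DifferentiableAt ℝ ρ (Θ x) :=
    ((hρ.differentiableOn one_ne_zero) (Θ x) hxbV).differentiableAt (hV.mem_nhds hxbV)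
  have hwd : DifferentiableAt ℝ w (Θ x) :=
    ((hw.differentiableOn one_ne_zero) (Θ x) hxbV).differentiableAt (hV.mem_nhds hxbV)
  have hΘd : DifferentiableAt ℝ Θ x :=
    (hΘdiff x hx).differentiableAt (hU.mem_nhds hx)
  have hΦd : HasFDerivAt Φ
      (ρ (Θ x) • (ContinuousLinearMap.id ℝ (EuclideanSpace ℝ (Fin n)))
        + (fderiv ℝ ρ (Θ x)).smulRight (Θ x)) (Θ x) := by
    rw [funext hΦdef]
    exact (hρd.hasFDerivAt.smul (hasFDerivAt_id (Θ x))).const_add a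
  -- chain rule: DΦ ∘ DΘ = id
  have hcomp : ∀ v : EuclideanSpace ℝ (Fin n),
      ρ (Θ x) • (fderiv ℝ Θ x v) + (fderiv ℝ ρ (Θ x) (fderiv ℝ Θ x v)) • Θ x = v := by
    have h1 : HasFDerivAt (Φ ∘ Θ)
        ((ρ (Θ x) • (ContinuousLinearMap.id ℝ (EuclideanSpace ℝ (Fin n)))
          + (fderiv ℝ ρ (Θ x)).smulRight (Θ x)).comp (fderiv ℝ Θ x)) x :=
      HasFDerivAt.comp x hΦd hΘd.hasFDerivAt
    have heq : (Φ ∘ Θ) =ᶠ[nhds x] id := by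
      filter_upwards [hU.mem_nhds hx] with y hy
      exact hΘinv y hy
    have h2 := (h1.congr_of_eventuallyEq heq.symm).unique (hasFDerivAt_id x)
    intro v
    have h3 := congrFun (congrArg DFunLike.coe h2) v
    simpa [ContinuousLinearMap.comp_apply, ContinuousLinearMap.add_apply,
      ContinuousLinearMap.smul_apply, ContinuousLinearMap.smulRight_apply] using h3
  have hud : HasFDerivAt u ((fderiv ℝ w (Θ x)).comp (fderiv ℝ Θ x)) x := by
    rw [hu]; exact HasFDerivAt.comp x hwd.hasFDerivAt hΘd.hasFDerivAt
  have hfρ : ∀ v, fderiv ℝ ρ (Θ x) v = ⟪gradient ρ (Θ x), v⟫ := fun v => by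
    rw [gradient, InnerProductSpace.toDual_symm_apply]
  have hfw : ∀ v, fderiv ℝ w (Θ x) v = ⟪gradient w (Θ x), v⟫ := fun v => by
    rw [gradient, InnerProductSpace.toDual_symm_apply]
  apply ext_inner_right ℝ
  intro v
  rw [gradient, InnerProductSpace.toDual_symm_apply, hud.fderiv]
  have h1 : ((fderiv ℝ w (Θ x)).comp (fderiv ℝ Θ x)) v
      = ⟪gradient w (Θ x), fderiv ℝ Θ x v⟫ := hfw _
  rw [h1]
  have hv := hcomp v
  have hΨρ : ⟪gradient ρ (Θ x), Θ x⟫ = Ψ - ρ (Θ x) := by rw [hΨdef]; ring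
  conv_rhs => rw [← hv]
  rw [inner_add_right, real_inner_smul_right, real_inner_smul_right, hfρ]
  rw [inner_sub_left, inner_sub_left, real_inner_smul_left, real_inner_smul_left,
    real_inner_smul_left, real_inner_smul_left, hΨρ,
    real_inner_comm (Θ x) (gradient w (Θ x))]
  set A := ⟪gradient w (Θ x), fderiv ℝ Θ x v⟫
  set B := ⟪gradient ρ (Θ x), fderiv ℝ Θ x v⟫
  set C := ⟪gradient w (Θ x), Θ x⟫
  field_simp
  ring
end

section
/- Let n ≥ 1, a ∈ ℝⁿ, let U ⊂ ℝⁿ be open, and let π : U → ℝ and ρ : ℝⁿ → ℝ be continuously differentiable with π(x) · ρ(π(x)(x − a)) = 1 for all x ∈ U. Fix x ∈ U, set x̄ := π(x)(x − a) and Ψ := ρ(x̄) + ∇ρ(x̄)·x̄, and assume Ψ ≠ 0. Define a_{ij} := π(x)² δ_{ij} + 2π(x)(x − a)^j ∂_{x^i}π(x) + (x − a)^i (x − a)^j |∇π(x)|². Then a_{ij} = δ_{ij}/ρ(x̄)² − 2 (∂_{x̄^i}ρ)(x̄) x̄^j/(ρ(x̄)² Ψ) + x̄^i x̄^j |∇ρ(x̄)|²/(ρ(x̄)²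 Ψ²). -/
/-- The coefficient matrix `a_{ij} = π²δ_{ij} + 2π (x−a)^j π_{x^i} + (x−a)^i (x−a)^j |∇π|²`
of the transformed heat operator, rewritten in terms of the inverse profile `ρ`:
`a_{ij} = δ_{ij}/ρ² − 2ρ_{x̄^i} x̄^j/(ρ²Ψ) + x̄^i x̄^j |∇ρ|²/(ρ²Ψ²)` at `x̄ = π(x)(x−a)`. -/
theorem coefficient_matrix_in_rho (n : ℕ) (hn : 1 ≤ n)
    (a : EuclideanSpace ℝ (Fin n))
    (U : Set (EuclideanSpace ℝ (Fin n))) (hU : IsOpen U)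
    (p : EuclideanSpace ℝ (Fin n) → ℝ) (ρ : EuclideanSpace ℝ (Fin n) → ℝ)
    (hp : ContDiffOn ℝ 1 p U) (hρ : ContDiff ℝ 1 ρ)
    (hrel : ∀ x ∈ U, p x * ρ (p x • (x - a)) = 1)
    (x : EuclideanSpace ℝ (Fin n)) (hx : x ∈ U)
    (xb : EuclideanSpace ℝ (Fin n)) (hxb : xb = p x • (x - a))
    (Ψ : ℝ) (hΨ : Ψ = ρ xb + fderiv ℝ ρ xb xb) (hΨ0 : Ψ ≠ 0) :
    ∀ i j : Fin n,
      p x ^ 2 * (if i = j then (1:ℝ) else 0)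
          + 2 * p x * (x - a) j * fderiv ℝ p x (EuclideanSpace.single i 1)
          + (x - a) i * (x - a) j *
              ∑ k, (fderiv ℝ p x (EuclideanSpace.single k 1)) ^ 2 =
        (if i = j then (1:ℝ) else 0) / ρ xb ^ 2
          - 2 * fderiv ℝ ρ xb (EuclideanSpace.single i 1) * xb j / (ρ xb ^ 2 * Ψ)
          + xb i * xb j *
              (∑ k, (fderiv ℝ ρ xb (EuclideanSpace.single k 1)) ^ 2) / (ρ xb ^ 2 * Ψ ^ 2) := by
  have hUx : U ∈ nhds x := hU.mem_nhds hx
  have hpd : DifferentiableAt ℝ p x :=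
    (((hp x hx).differentiableWithinAt one_ne_zero).differentiableAt hUx)
  have hρd : Differentiable ℝ ρ := hρ.differentiable one_ne_zero
  have hpρ : p x * ρ xb = 1 := by rw [hxb]; exact hrel x hx
  have hp0 : p x ≠ 0 := fun h => by simp [h] at hpρ
  have hρ0 : ρ xb ≠ 0 := fun h => by simp [h] at hpρ
  set P := fderiv ℝ p x with hP
  set R := fderiv ℝ ρ xb with hR
  have hId : HasFDerivAt (fun y : EuclideanSpace ℝ (Fin n) => y - a)
      (ContinuousLinearMap.id ℝ (EuclideanSpace ℝ (Fin n))) x :=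
    (hasFDerivAt_id x).sub_const a
  have hF : HasFDerivAt (fun y => p y • (y - a))
      (p x • ContinuousLinearMap.id ℝ (EuclideanSpace ℝ (Fin n)) + P.smulRight (x - a)) x :=
    hpd.hasFDerivAt.smul hId
  have hρ' : HasFDerivAt ρ R (p x • (x - a)) := by
    rw [← hxb]; exact (hρd xb).hasFDerivAt
  have hcomp := hρ'.comp x hF
  have hGd := hpd.hasFDerivAt.mul hcomp
  have h0 : (fun y => p y * ρ (p y • (y - a))) =ᶠ[nhds x] fun _ => (1:ℝ) :=
    Filter.eventuallyEq_of_mem hUx hrel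
  have hzero : HasFDerivAt (fun y => p y * ρ (p y • (y - a)))
      (0 : EuclideanSpace ℝ (Fin n) →L[ℝ] ℝ) x :=
    (hasFDerivAt_const (1:ℝ) x).congr_of_eventuallyEq h0
  have heq := hGd.unique hzero
  have hDxb : R xb = p x * R (x - a) := by rw [hxb, map_smul]; simp
  have key : ∀ v : EuclideanSpace ℝ (Fin n), P v * Ψ = -(p x)^2 * R v := by
    intro v
    have h := DFunLike.congr_fun heq v
    simp only [ContinuousLinearMap.add_apply, ContinuousLinearMap.coe_smul',
      Pi.smul_apply, ContinuousLinearMap.coe_comp', Function.comp_apply,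
      ContinuousLinearMap.smulRight_apply, ContinuousLinearMap.id_apply,
      ContinuousLinearMap.zero_apply, smul_eq_mul, map_add, map_smul, ← hxb] at h
    rw [hΨ]
    linear_combination h + (P v) * hDxb
  have hco : ∀ k, xb k = p x * (x - a) k := by
    intro k; rw [hxb]; rfl
  intro i j
  have hRi : R (EuclideanSpace.single i 1) = -(P (EuclideanSpace.single i 1)) * Ψ / (p x)^2 := by
    rw [eq_div_iff (pow_ne_zero 2 hp0)]
    linear_combination key (EuclideanSpace.single i 1)
  have hρeq : ρ xb = 1 / p x := by
    rw [eq_div_iff hp0]; linear_combination hpρ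
  have hT : (∑ k, (R (EuclideanSpace.single k 1)) ^ 2) =
      (∑ k, (P (EuclideanSpace.single k 1)) ^ 2) * Ψ^2 / (p x)^4 := by
    rw [eq_div_iff (pow_ne_zero 4 hp0), Finset.sum_mul, Finset.sum_mul]
    refine Finset.sum_congr rfl fun k _ => ?_
    linear_combination ((p x)^2 * R (EuclideanSpace.single k 1) -
      P (EuclideanSpace.single k 1) * Ψ) * key (EuclideanSpace.single k 1)
  set d : ℝ := if i = j then (1:ℝ) else 0 with hd
  rw [hρeq, hRi, hT, hco i, hco j]
  field_simp
  ring
end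

section
/- Let n ≥ 1 and let π : ℝⁿ → ℝ be continuously differentiable with |π(y) − 1| ≤ 1/8 and ‖∇π(y)‖ ≤ 1/8 for all y ∈ ℝⁿ. Let a ∈ ℝⁿ and let x̄ ∈ ℝⁿ satisfy 1/2 ≤ |x̄| ≤ 2. Then there exists a unique s ∈ [1/2, 3/2] such that π(a + s x̄) · s = 1. -/
/-- Solvability of the defining equation of the inverse profile `ρ` of the change of
variables fixing the moving domain: if `π` is uniformly close to `1` with small gradient,
then for `1/2 ≤ |x̄| ≤ 2` the equation `π(a + s x̄) s = 1` has a unique solution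
`s ∈ [1/2, 3/2]`. -/
theorem inverse_profile_solvable (n : ℕ) (hn : 1 ≤ n)
    (p : EuclideanSpace ℝ (Fin n) → ℝ) (hp : ContDiff ℝ 1 p)
    (hp1 : ∀ y, |p y - 1| ≤ 1/8) (hp2 : ∀ y, ‖fderiv ℝ p y‖ ≤ 1/8)
    (a xb : EuclideanSpace ℝ (Fin n)) (hxb : 1/2 ≤ ‖xb‖ ∧ ‖xb‖ ≤ 2) :
    ∃! s : ℝ, s ∈ Set.Icc (1/2 : ℝ) (3/2) ∧ p (a + s • xb) * s = 1 := by
  set g : ℝ → ℝ := fun s => p (a + s • xb) * s with hg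
  have hpd : Differentiable ℝ p := hp.differentiable one_ne_zero
  have hbound : ∀ y, 7/8 ≤ p y ∧ p y ≤ 9/8 := by
    intro y
    have := abs_le.mp (hp1 y)
    constructor <;> linarith [this.1, this.2]
  have hderiv : ∀ s : ℝ, HasDerivAt g
      ((fderiv ℝ p (a + s • xb) xb) * s + p (a + s • xb) * 1) s := by
    intro s
    have h1 : HasDerivAt (fun s : ℝ => a + s • xb) xb s := by
      simpa using (HasDerivAt.const_add a ((hasDerivAt_id s).smul_const xb))
    have h2 : HasDerivAt (fun s : ℝ => p (a + s • xb)) (fderiv ℝ p (a + s • xb) xb) s :=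
      (hpd (a + s • xb)).hasFDerivAt.comp_hasDerivAt s h1
    exact h2.mul (hasDerivAt_id s)
  have hcont : Continuous g := by
    exact (hp.continuous.comp (by continuity)).mul continuous_id
  have hderivpos : ∀ s ∈ Set.Icc (1/2 : ℝ) (3/2), 0 < deriv g s := by
    intro s hs
    rw [(hderiv s).deriv]
    have hb := hbound (a + s • xb)
    have h3 : |(fderiv ℝ p (a + s • xb)) xb| ≤ 1/4 := by
      have := (fderiv ℝ p (a + s • xb)).le_opNorm xb
      have h4 : ‖fderiv ℝ p (a + s • xb)‖ * ‖xb‖ ≤ (1/8) * 2 := by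
        apply mul_le_mul (hp2 _) hxb.2 (norm_nonneg _) (by norm_num)
      calc |(fderiv ℝ p (a + s • xb)) xb| ≤ ‖fderiv ℝ p (a + s • xb)‖ * ‖xb‖ := this
        _ ≤ 1/4 := by linarith
    have hs1 := hs.1
    have hs2 := hs.2
    have habs := abs_le.mp h3
    nlinarith [habs.1, habs.2, hb.1, hb.2]
  have hmono : StrictMonoOn g (Set.Icc (1/2 : ℝ) (3/2)) := by
    apply StrictMonoOn.mono (strictMonoOn_of_deriv_pos (convex_Icc _ _)
      hcont.continuousOn ?_) le_rfl
    intro s hs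
    exact hderivpos s (interior_subset hs)
  -- existence via IVT
  have h12 : g (1/2) ≤ 1 - 7/16 := by
    have hb := (hbound (a + (1/2 : ℝ) • xb)).2
    simp only [hg]
    nlinarith
  have h32 : 1 + 5/16 ≤ g (3/2) := by
    have hb := (hbound (a + (3/2 : ℝ) • xb)).1
    simp only [hg]
    nlinarith
  have hIVT : (1 : ℝ) ∈ g '' Set.Icc (1/2) (3/2) := by
    apply intermediate_value_Icc (by norm_num) hcont.continuousOn
    constructor <;> linarith
  obtain ⟨s, hsmem, hgs⟩ := hIVT
  refine ⟨s, ⟨hsmem, hgs⟩, ?_⟩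
  rintro t ⟨htmem, hgt⟩
  exact hmono.injOn htmem hsmem (by show p (a + t • xb) * t = g s; rw [hgt, hgs])
end
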